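/- Let E be a finite-dimensional real inner product space, F : E → ℝ differentiable with gradient ∇F, and β, μ ≥ 0 real numbers such that for all u, v ∈ E: ‖∇F(u) − ∇F(v)‖ ≤ β‖u − v‖ (β-smoothness) and ‖∇F(u) − ∇F(v)‖ ≥ μ‖u − v‖ (a consequence of μ-strong convexity). Let η ≥ 0 and K > 0, and set a := 1 − 2ηβ + η²μ², assuming a ≥ 0 and a ≠ 1. On a probability space Ω let (N_t)_{t∈ℕ} be square-integrable random vectors in E with E[N_t] = 0 and E‖N_t‖² = σ² for each t, and such that for each t, N_t is independent of (N_0, …, N_{t−1}). Define the noiseless iterates θ : ℕ → E by θ_{t+1} = θ_t − η·∇F(θ_t), and the noisy iterates θ̃ : ℕ → Ω → E by θ̃_0 = θ_0 (constant) and θ̃_{t+1} = θ̃_t − η·∇F(θ̃_t) + (η/K)·N_t. Then for all t ∈ ℕ, E‖θ̃_t − θ_t‖² ≥ ((a^t − 1)/(a − 1)) · (η²σ²/K²). -/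

import Mathlib

open MeasureTheory ProbabilityTheory RealInnerProductSpace

noncomputable def gdIter {E : Type*} [NormedAddCommGroup E] [InnerProductSpace ℝ E]
    (G : E → E) (η c : ℝ) (θ0 : E) : (t : ℕ) → (Fin t → E) → E
  | 0, _ => θ0
  | (t+1), x => gdIter G η c θ0 t (x ∘ Fin.castSucc)
      - η • G (gdIter G η c θ0 t (x ∘ Fin.castSucc)) + c • x (Fin.last t)

lemma gdIter_measurable {E : Type*} [NormedAddCommGroup E] [InnerProductSpace ℝ E]
    [MeasurableSpace E] [BorelSpace E] [SecondCountableTopology E]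
    {G : E → E} (hG : Continuous G) (η c : ℝ) (θ0 : E) (t : ℕ) :
    Measurable (gdIter G η c θ0 t) := by
  induction t with
  | zero => exact measurable_const
  | succ t ih =>
    have h1 : Measurable fun x : Fin (t+1) → E => gdIter G η c θ0 t (x ∘ Fin.castSucc) :=
      ih.comp (measurable_pi_lambda _ fun i => measurable_pi_apply _)
    exact (h1.sub ((hG.measurable.comp h1).const_smul η)).add
      ((measurable_pi_apply (Fin.last t)).const_smul c)

/-- Cumulative variance of DP-SGD: for a `μ`-strongly convex, `β`-smooth loss `F`
with gradient `G`, the expected squared distance between the noisy iterates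
`θ̃` (receiving independent mean-zero noise `(η/K) • N t` at step `t`) and the
noiseless gradient-descent iterates `θ` is at least
`((a^t − 1)/(a − 1)) · η²σ²/K²` where `a = 1 − 2ηβ + η²μ²`. -/
theorem cumulative_variance
    {E : Type*} [NormedAddCommGroup E] [InnerProductSpace ℝ E]
    [FiniteDimensional ℝ E] [MeasurableSpace E] [BorelSpace E]
    {Ω : Type*} [MeasurableSpace Ω] (P : Measure Ω) [IsProbabilityMeasure P]
    (F : E → ℝ) (G : E → E) (hF : ∀ x : E, HasGradientAt F (G x) x)
    (β μ : ℝ) (hβ : 0 ≤ β) (hμ : 0 ≤ μ)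
    (hsmooth : ∀ u v : E, ‖G u - G v‖ ≤ β * ‖u - v‖)
    (hconv : ∀ u v : E, μ * ‖u - v‖ ≤ ‖G u - G v‖)
    (η : ℝ) (hη : 0 ≤ η) (K : ℝ) (hK : 0 < K)
    (a : ℝ) (ha : a = 1 - 2 * η * β + η ^ 2 * μ ^ 2) (ha0 : 0 ≤ a) (ha1 : a ≠ 1)
    (σ : ℝ) (N : ℕ → Ω → E)
    (hNmem : ∀ t : ℕ, MemLp (N t) 2 P)
    (hNmean : ∀ t : ℕ, ∫ ω, N t ω ∂P = 0)
    (hNvar : ∀ t : ℕ, ∫ ω, ‖N t ω‖ ^ 2 ∂P = σ ^ 2)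
    (hNindep : ∀ t : ℕ, IndepFun (N t) (fun ω => fun i : Fin t => N i ω) P)
    (θ : ℕ → E) (hθ : ∀ t : ℕ, θ (t + 1) = θ t - η • G (θ t))
    (θt : ℕ → Ω → E) (hθt0 : ∀ ω : Ω, θt 0 ω = θ 0)
    (hθt : ∀ t : ℕ, ∀ ω : Ω,
      θt (t + 1) ω = θt t ω - η • G (θt t ω) + (η / K) • N t ω) :
    ∀ t : ℕ, ((a ^ t - 1) / (a - 1)) * (η ^ 2 * σ ^ 2 / K ^ 2) ≤
      ∫ ω, ‖θt t ω - θ t‖ ^ 2 ∂P := by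
  have hGlip : LipschitzWith β.toNNReal G := by
    apply LipschitzWith.of_dist_le_mul
    intro u v
    simpa [dist_eq_norm, Real.coe_toNNReal β hβ] using hsmooth u v
  have hGcont : Continuous G := hGlip.continuous
  -- MemLp of the noisy iterates
  have hθmem : ∀ t : ℕ, MemLp (θt t) 2 P := by
    intro t
    induction t with
    | zero =>
      have : θt 0 = fun _ => θ 0 := funext hθt0
      rw [this]; exact memLp_const _
    | succ t ih =>
      have hGmem : MemLp (fun ω => G (θt t ω)) 2 P := by
        refine MemLp.of_le ((ih.norm.const_mul β).add (memLp_const ‖G 0‖))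
          (hGcont.comp_aestronglyMeasurable ih.aestronglyMeasurable) ?_
        filter_upwards with ω
        have h1 : ‖G (θt t ω)‖ ≤ β * ‖θt t ω‖ + ‖G 0‖ := by
          calc ‖G (θt t ω)‖ ≤ ‖G (θt t ω) - G 0‖ + ‖G 0‖ := by
                simpa using norm_add_le (G (θt t ω) - G 0) (G 0)
            _ ≤ β * ‖θt t ω‖ + ‖G 0‖ := by
                have := hsmooth (θt t ω) 0; simp only [sub_zero] at this; linarith
        exact h1.trans (le_abs_self _)
      have : θt (t+1) = fun ω => θt t ω - η • G (θt t ω) + (η / K) • N t ω :=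
        funext (hθt t)
      rw [this]
      exact (ih.sub (hGmem.const_smul η)).add ((hNmem t).const_smul (η / K))
  have hGmem : ∀ t : ℕ, MemLp (fun ω => G (θt t ω)) 2 P := by
    intro t
    refine MemLp.of_le (((hθmem t).norm.const_mul β).add (memLp_const ‖G 0‖))
      (hGcont.comp_aestronglyMeasurable (hθmem t).aestronglyMeasurable) ?_
    filter_upwards with ω
    have h1 : ‖G (θt t ω)‖ ≤ β * ‖θt t ω‖ + ‖G 0‖ := by
      calc ‖G (θt t ω)‖ ≤ ‖G (θt t ω) - G 0‖ + ‖G 0‖ := by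
            simpa using norm_add_le (G (θt t ω) - G 0) (G 0)
        _ ≤ β * ‖θt t ω‖ + ‖G 0‖ := by
            have := hsmooth (θt t ω) 0; simp only [sub_zero] at this; linarith
    exact h1.trans (le_abs_self _)
  -- representation as a measurable function of the noise
  have hrep : ∀ t : ℕ, ∀ ω : Ω,
      θt t ω = gdIter G η (η / K) (θ 0) t (fun i : Fin t => N i ω) := by
    intro t
    induction t with
    | zero => intro ω; simp [gdIter, hθt0]
    | succ t ih =>
      intro ω
      have hc : ((fun i : Fin (t+1) => N i ω) ∘ Fin.castSucc) = fun i : Fin t => N i ω := by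
        funext i; simp
      rw [hθt t ω, ih ω]
      simp [gdIter, hc]
  -- the key one-step estimate
  set c2 : ℝ := η ^ 2 * σ ^ 2 / K ^ 2 with hc2
  intro t
  induction t with
  | zero =>
    simp only [pow_zero, sub_self, zero_div, zero_mul]
    exact integral_nonneg fun ω => sq_nonneg _
  | succ t ih =>
    set M : Ω → E := fun ω => (θt t ω - η • G (θt t ω)) - (θ t - η • G (θ t)) with hM
    have hMmem : MemLp M 2 P :=
      ((hθmem t).sub ((hGmem t).const_smul η)).sub (memLp_const _)
    -- independence of M and N t
    have hMN : IndepFun M (N t) P := by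
      have hφ : Measurable fun x : Fin t → E =>
          (gdIter G η (η / K) (θ 0) t x - η • G (gdIter G η (η / K) (θ 0) t x))
            - (θ t - η • G (θ t)) := by
        have h1 := gdIter_measurable hGcont η (η / K) (θ 0) t
        exact (h1.sub ((hGcont.measurable.comp h1).const_smul η)).sub measurable_const
      have : M = (fun x : Fin t → E =>
          (gdIter G η (η / K) (θ 0) t x - η • G (gdIter G η (η / K) (θ 0) t x))
            - (θ t - η • G (θ t))) ∘ (fun ω => fun i : Fin t => N i ω) := by
        funext ω; simp only [Function.comp, hM, hrep t ω]
      rw [this]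
      exact ((hNindep t).comp measurable_id hφ).symm
    -- cross term vanishes
    have hNint : Integrable (N t) P := (hNmem t).integrable one_le_two
    have b := stdOrthonormalBasis ℝ E
    set n := Module.finrank ℝ E
    have hinner_eq : ∀ ω, ⟪M ω, N t ω⟫ =
        ∑ i : Fin n, ⟪M ω, b i⟫ * ⟪b i, N t ω⟫ := fun ω =>
      (b.sum_inner_mul_inner (M ω) (N t ω)).symm
    have hcimem : ∀ i : Fin n, MemLp (fun ω => ⟪M ω, b i⟫) 2 P := by
      intro i
      refine MemLp.of_le hMmem.norm
        ((continuous_id.inner continuous_const).comp_aestronglyMeasurable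
          hMmem.aestronglyMeasurable) ?_
      filter_upwards with ω
      calc ‖⟪M ω, b i⟫‖ = |⟪M ω, b i⟫| := rfl
        _ ≤ ‖M ω‖ * ‖b i‖ := abs_real_inner_le_norm _ _
        _ = ‖M ω‖ := by rw [b.orthonormal.1 i, mul_one]
        _ ≤ ‖(‖M ω‖)‖ := le_abs_self _
    have hdimem : ∀ i : Fin n, MemLp (fun ω => ⟪b i, N t ω⟫) 2 P := by
      intro i
      refine MemLp.of_le (hNmem t).norm
        ((continuous_const.inner continuous_id).comp_aestronglyMeasurable
          (hNmem t).aestronglyMeasurable) ?_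
      filter_upwards with ω
      calc ‖⟪b i, N t ω⟫‖ = |⟪b i, N t ω⟫| := rfl
        _ ≤ ‖b i‖ * ‖N t ω‖ := abs_real_inner_le_norm _ _
        _ = ‖N t ω‖ := by rw [b.orthonormal.1 i, one_mul]
        _ ≤ ‖(‖N t ω‖)‖ := le_abs_self _
    have hciind : ∀ i : Fin n, IndepFun (fun ω => ⟪M ω, b i⟫) (fun ω => ⟪b i, N t ω⟫) P := by
      intro i
      exact hMN.comp (continuous_id.inner continuous_const).measurable
        (continuous_const.inner continuous_id).measurable
    have hterm_int : ∀ i : Fin n,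
        Integrable (fun ω => ⟪M ω, b i⟫ * ⟪b i, N t ω⟫) P := fun i =>
      (hciind i).integrable_mul ((hcimem i).integrable one_le_two)
        ((hdimem i).integrable one_le_two)
    have hinner_int : Integrable (fun ω => ⟪M ω, N t ω⟫) P := by
      have : (fun ω => ⟪M ω, N t ω⟫) =
          fun ω => ∑ i : Fin n, ⟪M ω, b i⟫ * ⟪b i, N t ω⟫ := funext hinner_eq
      rw [this]
      exact integrable_finset_sum _ fun i _ => hterm_int i
    have hcross : ∫ ω, ⟪M ω, N t ω⟫ ∂P = 0 := by
      have : (fun ω => ⟪M ω, N t ω⟫) =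
          fun ω => ∑ i : Fin n, ⟪M ω, b i⟫ * ⟪b i, N t ω⟫ := funext hinner_eq
      rw [this, integral_finset_sum _ fun i _ => hterm_int i]
      refine Finset.sum_eq_zero fun i _ => ?_
      rw [(hciind i).integral_fun_mul_eq_mul_integral ((hcimem i).integrable one_le_two).aestronglyMeasurable
        ((hdimem i).integrable one_le_two).aestronglyMeasurable]
      have : ∫ ω, ⟪b i, N t ω⟫ ∂P = ⟪b i, ∫ ω, N t ω ∂P⟫ := integral_inner hNint (b i)
      rw [this, hNmean t, inner_zero_right, mul_zero]
    -- expand the square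
    have hMsq_int : Integrable (fun ω => ‖M ω‖ ^ 2) P := hMmem.norm.integrable_sq
    have hNsq_int : Integrable (fun ω => ‖N t ω‖ ^ 2) P := (hNmem t).norm.integrable_sq
    have hexp : ∫ ω, ‖θt (t+1) ω - θ (t+1)‖ ^ 2 ∂P =
        (∫ ω, ‖M ω‖ ^ 2 ∂P) + (η / K) ^ 2 * σ ^ 2 := by
      have heq : (fun ω => ‖θt (t+1) ω - θ (t+1)‖ ^ 2) =
          fun ω => ‖M ω‖ ^ 2 + (2 * (η / K)) * ⟪M ω, N t ω⟫
            + (η / K) ^ 2 * ‖N t ω‖ ^ 2 := by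
        funext ω
        have hD : θt (t+1) ω - θ (t+1) = M ω + (η / K) • N t ω := by
          rw [hθt t ω, hθ t, hM]; module
        rw [hD, norm_add_sq_real, real_inner_smul_right, norm_smul]
        simp only [norm_div, Real.norm_eq_abs, div_pow, abs_of_nonneg hη, abs_of_pos hK]
        ring
      have h12 : Integrable (fun ω => ‖M ω‖ ^ 2
          + 2 * (η / K) * ⟪M ω, N t ω⟫) P := by
        exact hMsq_int.add (hinner_int.const_mul _)
      have h3 : Integrable (fun ω => (η / K) ^ 2 * ‖N t ω‖ ^ 2) P :=
        hNsq_int.const_mul _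
      rw [heq, integral_add h12 h3, integral_add hMsq_int (hinner_int.const_mul _),
        integral_const_mul, integral_const_mul, hcross, hNvar t]
      ring
    -- contraction
    have hcontr : a * ∫ ω, ‖θt t ω - θ t‖ ^ 2 ∂P ≤ ∫ ω, ‖M ω‖ ^ 2 ∂P := by
      have hDsq_int : Integrable (fun ω => ‖θt t ω - θ t‖ ^ 2) P :=
        ((hθmem t).sub (memLp_const _)).norm.integrable_sq
      rw [← integral_const_mul]
      refine integral_mono (hDsq_int.const_mul a) hMsq_int fun ω => ?_
      have hptw : M ω = (θt t ω - θ t) - η • (G (θt t ω) - G (θ t)) := by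
        rw [hM, smul_sub]; abel
      set d := θt t ω - θ t
      set g := G (θt t ω) - G (θ t)
      have h1 : ⟪d, g⟫ ≤ ‖d‖ * ‖g‖ := real_inner_le_norm d g
      have h2 : ‖g‖ ≤ β * ‖d‖ := hsmooth (θt t ω) (θ t)
      have h3 : μ * ‖d‖ ≤ ‖g‖ := hconv (θt t ω) (θ t)
      have h4 : (0:ℝ) ≤ ‖d‖ := norm_nonneg d
      have h5 : (0:ℝ) ≤ ‖g‖ := norm_nonneg g
      have hexp2 : ‖M ω‖ ^ 2 = ‖d‖ ^ 2 - 2 * (η * ⟪d, g⟫) + η ^ 2 * ‖g‖ ^ 2 := by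
        rw [hptw, norm_sub_sq_real, real_inner_smul_right, norm_smul]
        simp only [Real.norm_eq_abs]
        rw [mul_pow, sq_abs]
      rw [hexp2, ha]
      nlinarith [mul_le_mul_of_nonneg_left h1 hη,
        mul_le_mul_of_nonneg_left (mul_le_mul_of_nonneg_left h2 h4) hη,
        mul_le_mul_of_nonneg_left
          (mul_self_le_mul_self (mul_nonneg hμ h4) h3) (sq_nonneg η)]
    -- conclude
    rw [hexp]
    have hc2' : (η / K) ^ 2 * σ ^ 2 = c2 := by rw [hc2]; ring
    rw [hc2']
    have hgeom : (a ^ (t + 1) - 1) / (a - 1) * c2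
        = a * ((a ^ t - 1) / (a - 1) * c2) + c2 := by
      have h := sub_ne_zero.mpr ha1
      field_simp
      ring
    rw [hgeom]
    have h1 := mul_le_mul_of_nonneg_left ih ha0
    linarith [hcontr]
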